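/- arXiv:2012.06376 — 7 statements merged into one kernel-verified Lean document; each statement's English description precedes it below -/
import Mathlib

section
/- Let ψ : [0,∞) → [−1,1] be continuous and strictly decreasing with ψ(δ) = 0 for some δ > 0. Let η > 0, γ₀ ∈ [0,1], and ρ ∈ [0, δ). Let e : [0,∞) → [0,∞) be Lebesgue measurable with e(t) ≤ ρ for all t ≥ 0, and define γ(t) := min{1, γ₀ + η ∫₀ᵗ ψ(e(τ)) dτ}. Then ψ(ρ) > 0 and γ(t) = 1 for all t ≥ (1 − γ₀)/(η ψ(ρ)). -/
noncomputable section

/-- Trust dynamics: if the prediction error `e` stays below `ρ < δ`, then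
`ψ ρ > 0` and the (saturated) trust variable
`γ(t) = min {1, γ₀ + η ∫₀ᵗ ψ(e τ) dτ}` reaches `1` by time `(1 − γ₀)/(η ψ(ρ))`. -/
theorem statement_5 (ψ : ℝ → ℝ) (hψcont : ContinuousOn ψ (Set.Ici 0))
    (hψanti : StrictAntiOn ψ (Set.Ici 0))
    (hψrange : ∀ u ≥ (0 : ℝ), ψ u ∈ Set.Icc (-1 : ℝ) 1)
    (δ : ℝ) (hδ : 0 < δ) (hψδ : ψ δ = 0)
    (η : ℝ) (hη : 0 < η) (γ0 : ℝ) (hγ0 : γ0 ∈ Set.Icc (0 : ℝ) 1)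
    (ρ : ℝ) (hρ : ρ ∈ Set.Ico 0 δ)
    (e : ℝ → ℝ) (he : Measurable e) (hebd : ∀ t ≥ (0 : ℝ), e t ∈ Set.Icc 0 ρ)
    (γ : ℝ → ℝ)
    (hγ : ∀ t, γ t = min 1 (γ0 + η * ∫ τ in (0 : ℝ)..t, ψ (e τ))) :
    0 < ψ ρ ∧ ∀ t ≥ (1 - γ0) / (η * ψ ρ), γ t = 1 := by
  have hψρ : 0 < ψ ρ := by
    have := hψanti hρ.1 (le_of_lt hδ) hρ.2
    linarith [hψδ]
  refine ⟨hψρ, fun t ht => ?_⟩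
  have hηψ : 0 < η * ψ ρ := mul_pos hη hψρ
  have ht0 : (0 : ℝ) ≤ t := le_trans (div_nonneg (by linarith [hγ0.2]) hηψ.le) ht
  -- antitone extension of ψ ∘ max · 0
  set g : ℝ → ℝ := fun x => ψ (max x 0) with hg
  have hganti : Antitone g := fun x y hxy =>
    (hψanti.antitoneOn (le_max_right x 0) (le_max_right y 0)
      (max_le_max hxy le_rfl))
  have hgmeas : Measurable (fun τ => g (e τ)) := (hganti.measurable).comp he
  have heq : ∀ τ ∈ Set.uIcc (0 : ℝ) t, ψ (e τ) = g (e τ) := by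
    intro τ hτ
    rw [Set.uIcc_of_le ht0] at hτ
    have h0 : 0 ≤ e τ := (hebd τ hτ.1).1
    simp [hg, max_eq_left h0]
  have hint : IntervalIntegrable (fun τ => g (e τ)) MeasureTheory.volume 0 t := by
    refine IntervalIntegrable.mono_fun' (g := fun _ => (1:ℝ))
      intervalIntegrable_const hgmeas.aestronglyMeasurable ?_
    rw [Filter.EventuallyLE, MeasureTheory.ae_restrict_iff' measurableSet_uIoc]
    filter_upwards with τ hτ
    rw [Set.uIoc_of_le ht0] at hτ
    have h0 : 0 ≤ e τ := (hebd τ hτ.1.le).1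
    have := hψrange (e τ) h0
    rw [Real.norm_eq_abs, abs_le]
    constructor <;> simp [hg, max_eq_left h0] <;> [exact this.1; exact this.2]
  have hcongr : (∫ τ in (0:ℝ)..t, ψ (e τ)) = ∫ τ in (0:ℝ)..t, g (e τ) :=
    intervalIntegral.integral_congr heq
  have hmono : t * ψ ρ ≤ ∫ τ in (0:ℝ)..t, g (e τ) := by
    have : (∫ τ in (0:ℝ)..t, ψ ρ) ≤ ∫ τ in (0:ℝ)..t, g (e τ) := by
      apply intervalIntegral.integral_mono_on ht0 intervalIntegrable_const hint
      intro τ hτ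
      have h0 : 0 ≤ e τ := (hebd τ hτ.1).1
      have hle : e τ ≤ ρ := (hebd τ hτ.1).2
      have := hψanti.antitoneOn h0 hρ.1 hle
      simpa [hg, max_eq_left h0] using this
    simpa using this
  have hkey : (1 : ℝ) ≤ γ0 + η * ∫ τ in (0:ℝ)..t, ψ (e τ) := by
    rw [hcongr]
    have ht' : (1 - γ0) ≤ t * (η * ψ ρ) := (div_le_iff₀ hηψ).mp ht
    nlinarith [hmono, hη.le]
  rw [hγ t, min_eq_left hkey]
end
end

section
/- Let x* ∈ ℝ^n and let x' ∈ X* satisfy the variational inequality (x' − x*)ᵀ S⁻¹ (y − x') ≥ 0 for all y ∈ X*. Define p' := S⁻¹ (Σ_{i=1}^N c_i − x'). Then p' ∈ B and (Σ_{i=1}^N (c_i − Q_i⁻¹ p') − x*)ᵀ (p' − s) ≥ 0 for all s ∈ B. -/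
open scoped RealInnerProductSpace
open Matrix

noncomputable section

/-- The action of a real `n × n` matrix on Euclidean space. -/
def mvec {n : ℕ} (M : Matrix (Fin n) (Fin n) ℝ) (x : EuclideanSpace ℝ (Fin n)) :
    EuclideanSpace ℝ (Fin n) :=
  Matrix.toEuclideanLin M x

lemma mvec_mul {n : ℕ} (A B : Matrix (Fin n) (Fin n) ℝ) (x : EuclideanSpace ℝ (Fin n)) :
    mvec (A * B) x = mvec A (mvec B x) := by
  simp [mvec, Matrix.toEuclideanLin_apply, Matrix.mulVec_mulVec]

lemma mvec_one {n : ℕ} (x : EuclideanSpace ℝ (Fin n)) : mvec 1 x = x := by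
  simp [mvec, Matrix.toEuclideanLin_apply]

lemma mvec_sum {n N : ℕ} (M : Fin N → Matrix (Fin n) (Fin n) ℝ)
    (x : EuclideanSpace ℝ (Fin n)) : mvec (∑ i, M i) x = ∑ i, mvec (M i) x := by
  simp [mvec, map_sum, LinearMap.sum_apply]

lemma mvec_sub {n : ℕ} (A : Matrix (Fin n) (Fin n) ℝ) (x y : EuclideanSpace ℝ (Fin n)) :
    mvec A (x - y) = mvec A x - mvec A y := by
  simp [mvec, map_sub]

lemma posDef_sum {n N : ℕ} (hN : 0 < N) (M : Fin N → Matrix (Fin n) (Fin n) ℝ)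
    (hM : ∀ i, (M i).PosDef) : (∑ i, M i).PosDef := by
  rw [Matrix.posDef_iff_dotProduct_mulVec]
  constructor
  · unfold Matrix.IsHermitian
    rw [Matrix.conjTranspose_sum]
    exact Finset.sum_congr rfl fun i _ => (hM i).1
  · intro x hx
    have h1 : (∑ i, M i) *ᵥ x = ∑ i, M i *ᵥ x :=
      map_sum (Matrix.mulVec.addMonoidHomLeft x) M Finset.univ
    have h2 : star x ⬝ᵥ (∑ i, M i *ᵥ x) = ∑ i, star x ⬝ᵥ (M i *ᵥ x) := by
      simp only [dotProduct, Finset.sum_apply, Finset.mul_sum]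
      exact Finset.sum_comm
    rw [h1, h2]
    have : ∀ i ∈ Finset.univ, (0:ℝ) < star x ⬝ᵥ (M i) *ᵥ x := by
      intro i _
      simpa using (hM i).dotProduct_mulVec_pos hx
    have := Finset.sum_pos this (by simp [Finset.univ_nonempty_iff, Fin.pos_iff_nonempty.mp hN])
    simpa using this

/-- If `x' ∈ X*` satisfies the variational inequality
`⟨x' − x*, S⁻¹ (y − x')⟩ ≥ 0` on `X*`, then `p' := S⁻¹ (∑ i c i − x')`
belongs to `B` and `⟨∑ i (c i − (Q i)⁻¹ p') − x*, p' − s⟩ ≥ 0` for all `s ∈ B`. -/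
theorem statement_7 (n N : ℕ) (hn : 0 < n) (hN : 0 < N)
    (Q : Fin N → Matrix (Fin n) (Fin n) ℝ) (hQ : ∀ i, (Q i).PosDef)
    (c : Fin N → EuclideanSpace ℝ (Fin n))
    (S : Matrix (Fin n) (Fin n) ℝ) (hS : S = ∑ i, (Q i)⁻¹)
    (p0 : EuclideanSpace ℝ (Fin n)) (δbar : ℝ) (hδ : 0 < δbar)
    (B : Set (EuclideanSpace ℝ (Fin n))) (hB : B = Metric.closedBall p0 δbar)
    (Xstar : Set (EuclideanSpace ℝ (Fin n)))
    (hXstar : Xstar = {x | ∃ phat ∈ B, x = ∑ i, (c i - mvec (Q i)⁻¹ phat)})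
    (xstar : EuclideanSpace ℝ (Fin n))
    (x' : EuclideanSpace ℝ (Fin n)) (hx' : x' ∈ Xstar)
    (hVI : ∀ y ∈ Xstar, 0 ≤ ⟪x' - xstar, mvec S⁻¹ (y - x')⟫)
    (p' : EuclideanSpace ℝ (Fin n))
    (hp' : p' = mvec S⁻¹ ((∑ i, c i) - x')) :
    p' ∈ B ∧ ∀ s ∈ B, 0 ≤ ⟪(∑ i, (c i - mvec (Q i)⁻¹ p')) - xstar, p' - s⟫ := by
  have hSpd : S.PosDef := hS ▸ posDef_sum hN _ (fun i => (hQ i).inv)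
  have hinvmul : S⁻¹ * S = 1 := Matrix.nonsing_inv_mul S hSpd.det_pos.ne'.isUnit
  -- rewrite elements of Xstar
  have key : ∀ p : EuclideanSpace ℝ (Fin n),
      (∑ i, (c i - mvec (Q i)⁻¹ p)) = (∑ i, c i) - mvec S p := by
    intro p
    rw [hS, mvec_sum, Finset.sum_sub_distrib]
  obtain ⟨phat, hphatB, hx'eq⟩ := hXstar ▸ hx'
  have hx'2 : x' = (∑ i, c i) - mvec S phat := by rw [hx'eq, key]
  have hp'phat : p' = phat := by
    rw [hp', hx'2]
    have : (∑ i, c i) - ((∑ i, c i) - mvec S phat) = mvec S phat := by abel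
    rw [this, ← mvec_mul, hinvmul, mvec_one]
  constructor
  · rw [hp'phat]; exact hphatB
  · intro s hs
    have hy : (∑ i, (c i - mvec (Q i)⁻¹ s)) ∈ Xstar := by
      rw [hXstar]; exact ⟨s, hs, rfl⟩
    have h := hVI _ hy
    have e1 : (∑ i, (c i - mvec (Q i)⁻¹ p')) - xstar = x' - xstar := by
      rw [key, hp'phat, ← hx'2]
    have e2 : mvec S⁻¹ ((∑ i, (c i - mvec (Q i)⁻¹ s)) - x') = p' - s := by
      rw [key, hx'2, hp'phat]
      have : (∑ i, c i) - mvec S s - ((∑ i, c i) - mvec S phat)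
          = mvec S phat - mvec S s := by abel
      rw [this, ← mvec_sub, ← mvec_mul, hinvmul, mvec_one]
    rw [e2] at h
    rw [e1]
    exact h
end
end

section
/- Let x* ∈ ℝ^n, define f(p̂) := Σ_{i=1}^N c_i − S p̂ − x*, and let p' ∈ B satisfy (Σ_{i=1}^N (c_i − Q_i⁻¹ p') − x*)ᵀ (p' − s) ≥ 0 for all s ∈ B. Then for every p̂ ∈ B and every vector w ∈ ℝ^n satisfying ⟨w, s − p̂⟩ ≤ 0 for all s ∈ B, one has ⟨p̂ − p', f(p̂) − w⟩ ≤ −(p̂ − p')ᵀ S (p̂ − p'). -/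
open scoped RealInnerProductSpace
open Matrix

noncomputable section

/-- If `p' ∈ B` satisfies `⟨∑ i (c i − (Q i)⁻¹ p') − x*, p' − s⟩ ≥ 0` on `B`,
then for every `p̂ ∈ B` and `w` in the normal cone of `B` at `p̂`:
`⟨p̂ − p', f(p̂) − w⟩ ≤ −⟨p̂ − p', S (p̂ − p')⟩` with `f(p̂) = ∑ c i − S p̂ − x*`. -/
theorem statement_8 (n N : ℕ) (hn : 0 < n) (hN : 0 < N)
    (Q : Fin N → Matrix (Fin n) (Fin n) ℝ) (hQ : ∀ i, (Q i).PosDef)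
    (c : Fin N → EuclideanSpace ℝ (Fin n))
    (S : Matrix (Fin n) (Fin n) ℝ) (hS : S = ∑ i, (Q i)⁻¹)
    (p0 : EuclideanSpace ℝ (Fin n)) (δbar : ℝ) (hδ : 0 < δbar)
    (B : Set (EuclideanSpace ℝ (Fin n))) (hB : B = Metric.closedBall p0 δbar)
    (xstar : EuclideanSpace ℝ (Fin n))
    (f : EuclideanSpace ℝ (Fin n) → EuclideanSpace ℝ (Fin n))
    (hf : ∀ phat, f phat = (∑ i, c i) - mvec S phat - xstar)
    (p' : EuclideanSpace ℝ (Fin n)) (hp' : p' ∈ B)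
    (hVI : ∀ s ∈ B, 0 ≤ ⟪(∑ i, (c i - mvec (Q i)⁻¹ p')) - xstar, p' - s⟫)
    (phat : EuclideanSpace ℝ (Fin n)) (hphat : phat ∈ B)
    (w : EuclideanSpace ℝ (Fin n)) (hw : ∀ s ∈ B, ⟪w, s - phat⟫ ≤ 0) :
    ⟪phat - p', f phat - w⟫ ≤ -⟪phat - p', mvec S (phat - p')⟫ := by
  have hsum : (∑ i, (c i - mvec (Q i)⁻¹ p')) - xstar
      = (∑ i, c i) - mvec S p' - xstar := by
    simp only [mvec, hS, Finset.sum_sub_distrib, map_sum, LinearMap.sum_apply,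
      Matrix.toEuclideanLin]
  have h1 : 0 ≤ ⟪(∑ i, c i) - mvec S p' - xstar, p' - phat⟫ := by
    rw [← hsum]; exact hVI phat hphat
  have h2 : ⟪w, p' - phat⟫ ≤ 0 := hw p' hp'
  have hlin : f phat = ((∑ i, c i) - mvec S p' - xstar) - mvec S (phat - p') := by
    rw [hf]
    simp only [mvec, map_sub]
    abel
  rw [hlin]
  have hA : ⟪phat - p', (∑ i, c i) - mvec S p' - xstar⟫ ≤ 0 := by
    rw [real_inner_comm, show phat - p' = -(p' - phat) from by abel, inner_neg_right]
    linarith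
  have hw2 : 0 ≤ ⟪phat - p', w⟫ := by
    rw [real_inner_comm, show phat - p' = -(p' - phat) from by abel, inner_neg_right]
    linarith
  rw [inner_sub_right, inner_sub_right]
  linarith
end
end

section
/- Let ε > 0 and ν̄ > 0. Let p̂ ∈ ℝ^n, set d := p̂ − P_B(p̂), let γ_1,…,γ_N ∈ [0,1], and let ν ∈ ℝ^n with ‖ν‖ ≤ ν̄. If ‖d‖ ≥ 2εν̄, then ⟨d, −(ε⁻¹ I + Σ_{i=1}^N γ_i Q_i⁻¹) d + ν⟩ ≤ −(1/(2ε)) ‖d‖². -/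
open scoped RealInnerProductSpace
open Matrix

noncomputable section

/-- If `d = p̂ − P_B(p̂)` satisfies `‖d‖ ≥ 2 ε ν̄`, then
`⟨d, −(ε⁻¹ I + ∑ γ_i (Q i)⁻¹) d + ν⟩ ≤ −(1/(2ε)) ‖d‖²` whenever `‖ν‖ ≤ ν̄`
and every `γ_i ∈ [0,1]`. -/
theorem statement_10 (n N : ℕ) (hn : 0 < n) (hN : 0 < N)
    (Q : Fin N → Matrix (Fin n) (Fin n) ℝ) (hQ : ∀ i, (Q i).PosDef)
    (p0 : EuclideanSpace ℝ (Fin n)) (δbar : ℝ) (hδ : 0 < δbar)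
    (B : Set (EuclideanSpace ℝ (Fin n))) (hB : B = Metric.closedBall p0 δbar)
    (P : EuclideanSpace ℝ (Fin n) → EuclideanSpace ℝ (Fin n))
    (hP : ∀ x, P x ∈ B ∧ ∀ y ∈ B, ‖x - P x‖ ≤ ‖x - y‖)
    (ε νbar : ℝ) (hε : 0 < ε) (hνbar : 0 < νbar)
    (phat : EuclideanSpace ℝ (Fin n))
    (d : EuclideanSpace ℝ (Fin n)) (hd : d = phat - P phat)
    (γ : Fin N → ℝ) (hγ : ∀ i, γ i ∈ Set.Icc (0 : ℝ) 1)
    (ν : EuclideanSpace ℝ (Fin n)) (hν : ‖ν‖ ≤ νbar)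
    (hdbig : 2 * ε * νbar ≤ ‖d‖) :
    ⟪d, -mvec (ε⁻¹ • (1 : Matrix (Fin n) (Fin n) ℝ) + ∑ i, γ i • (Q i)⁻¹) d + ν⟫ ≤
      -(1 / (2 * ε)) * ‖d‖ ^ 2 := by
  have hsplit : mvec (ε⁻¹ • (1 : Matrix (Fin n) (Fin n) ℝ) + ∑ i, γ i • (Q i)⁻¹) d
      = ε⁻¹ • d + ∑ i, γ i • mvec ((Q i)⁻¹) d := by
    simp [mvec, map_add, map_sum, _root_.map_smul, Matrix.toEuclideanLin_apply,
      Matrix.add_mulVec, Matrix.smul_mulVec, Matrix.one_mulVec]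
  have hnonneg : ∀ i, 0 ≤ ⟪d, mvec ((Q i)⁻¹) d⟫ := by
    intro i
    have h := ((hQ i).inv).posSemidef.re_dotProduct_nonneg d
    simpa [mvec, Matrix.toEuclideanLin_apply, PiLp.inner_apply, dotProduct,
      RCLike.inner_apply, mul_comm] using h
  have hsum : 0 ≤ ∑ i, γ i * ⟪d, mvec ((Q i)⁻¹) d⟫ := by
    apply Finset.sum_nonneg
    intro i _
    exact mul_nonneg (hγ i).1 (hnonneg i)
  have hinner : ⟪d, ν⟫ ≤ ‖d‖ * νbar := by
    calc ⟪d, ν⟫ ≤ ‖d‖ * ‖ν‖ := real_inner_le_norm d ν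
    _ ≤ ‖d‖ * νbar := by nlinarith [norm_nonneg d]
  have hns : ⟪d, d⟫ = ‖d‖ ^ 2 := real_inner_self_eq_norm_sq d
  rw [inner_add_right, inner_neg_right, hsplit, inner_add_right, inner_smul_right,
    inner_sum]
  simp only [inner_smul_right]
  have hdn : 0 ≤ ‖d‖ := norm_nonneg d
  rw [hns]
  have h1 : ‖d‖ * νbar ≤ 1 / (2 * ε) * ‖d‖ ^ 2 := by
    rw [div_mul_eq_mul_div, one_mul, le_div_iff₀ (by positivity : (0:ℝ) < 2 * ε)]
    nlinarith [mul_le_mul_of_nonneg_left hdbig hdn]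
  have hε2 : ε⁻¹ * ‖d‖ ^ 2 = 2 * (1 / (2 * ε)) * ‖d‖ ^ 2 := by
    field_simp
  linarith
end
end

section
/- Let p* ∈ B, let ε > 0, and let p : [0,∞) → ℝ^n be differentiable with derivative p'(t) = −S (p(t) − p*) + ε⁻¹ (P_B(p(t)) − p(t)) for all t ≥ 0. Then ‖p(t) − p*‖ ≤ e^{−λt} ‖p(0) − p*‖ for all t ≥ 0, where λ := λ_min(S) > 0 is the smallest eigenvalue of S; in particular p(t) converges to p* as t → ∞. -/
open scoped RealInnerProductSpace
open Matrix

noncomputable section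

/-- Solutions of `p' = −S (p − p*) + ε⁻¹ (P_B(p) − p)` with `p* ∈ B` satisfy
`‖p(t) − p*‖ ≤ e^{−λ t} ‖p(0) − p*‖` with `λ = λ_min(S) > 0`; in particular
`p(t) → p*`. -/
theorem statement_11 (n N : ℕ) (hn : 0 < n) (hN : 0 < N)
    (Q : Fin N → Matrix (Fin n) (Fin n) ℝ) (hQ : ∀ i, (Q i).PosDef)
    (S : Matrix (Fin n) (Fin n) ℝ) (hS : S = ∑ i, (Q i)⁻¹) (hSH : S.IsHermitian)
    (p0 : EuclideanSpace ℝ (Fin n)) (δbar : ℝ) (hδ : 0 < δbar)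
    (B : Set (EuclideanSpace ℝ (Fin n))) (hB : B = Metric.closedBall p0 δbar)
    (P : EuclideanSpace ℝ (Fin n) → EuclideanSpace ℝ (Fin n))
    (hP : ∀ x, P x ∈ B ∧ ∀ y ∈ B, ‖x - P x‖ ≤ ‖x - y‖)
    (pstar : EuclideanSpace ℝ (Fin n)) (hpstar : pstar ∈ B)
    (ε : ℝ) (hε : 0 < ε)
    (p : ℝ → EuclideanSpace ℝ (Fin n))
    (hp : ∀ t ≥ (0 : ℝ),
      HasDerivAt p (-mvec S (p t - pstar) + ε⁻¹ • (P (p t) - p t)) t)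
    (lam : ℝ) (hlam : lam = ⨅ i, hSH.eigenvalues i) :
    0 < lam ∧
      (∀ t ≥ (0 : ℝ), ‖p t - pstar‖ ≤ Real.exp (-lam * t) * ‖p 0 - pstar‖) ∧
      Filter.Tendsto p Filter.atTop (nhds pstar) := by
  classical
  haveI : Nonempty (Fin n) := ⟨⟨0, hn⟩⟩
  haveI : Nonempty (Fin N) := ⟨⟨0, hN⟩⟩
  -- S is positive definite
  have hSpd : S.PosDef := by
    refine Matrix.posDef_iff_dotProduct_mulVec.mpr ⟨hSH, fun x hx => ?_⟩
    have hmv : S *ᵥ x = ∑ i, (Q i)⁻¹ *ᵥ x := by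
      rw [hS]
      ext j
      simp [Matrix.mulVec, dotProduct, Finset.sum_apply, Matrix.sum_apply, Finset.sum_mul]
      rw [Finset.sum_comm]
    rw [hmv]
    have hdp : star x ⬝ᵥ (∑ i, (Q i)⁻¹ *ᵥ x) = ∑ i, star x ⬝ᵥ ((Q i)⁻¹ *ᵥ x) := by
      simp [dotProduct, Finset.mul_sum]
      rw [Finset.sum_comm]
    rw [hdp]
    exact Finset.sum_pos (fun i _ => ((hQ i).inv).dotProduct_mulVec_pos hx) Finset.univ_nonempty
  -- lam is positive, and bounds every eigenvalue from below
  have hlampos : 0 < lam := by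
    obtain ⟨j, hj⟩ := exists_eq_ciInf_of_finite (f := hSH.eigenvalues)
    rw [hlam, ← hj]
    exact hSpd.eigenvalues_pos j
  have hmin : ∀ j, lam ≤ hSH.eigenvalues j := by
    intro j
    rw [hlam]
    exact ciInf_le (Set.Finite.bddBelow (Set.finite_range _)) j
  -- quadratic form lower bound
  have hquad : ∀ v : EuclideanSpace ℝ (Fin n), lam * ‖v‖^2 ≤ ⟪mvec S v, v⟫ := by
    intro v
    set b := hSH.eigenvectorBasis with hb
    have hsym : (Matrix.toEuclideanLin S).IsSymmetric :=
      Matrix.isHermitian_iff_isSymmetric.mp hSH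
    have happ : ∀ j, mvec S (b j) = hSH.eigenvalues j • b j := by
      intro j
      have h := hSH.mulVec_eigenvectorBasis j
      apply PiLp.ext
      intro i
      have := congrFun h i
      simpa [mvec, Matrix.toEuclideanLin_apply] using this
    have hrepr : ∀ j, b.repr (mvec S v) j = hSH.eigenvalues j * b.repr v j := by
      intro j
      rw [b.repr_apply_apply, b.repr_apply_apply]
      have h1 : ⟪b j, mvec S v⟫ = ⟪mvec S (b j), v⟫ := (hsym (b j) v).symm
      rw [h1, happ j, real_inner_smul_left]
    have h1 : ⟪mvec S v, v⟫ = ∑ j, hSH.eigenvalues j * (b.repr v j)^2 := by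
      rw [← b.repr.inner_map_map (mvec S v) v, PiLp.inner_apply]
      refine Finset.sum_congr rfl fun j _ => ?_
      rw [hrepr j]
      simp [RCLike.inner_apply, sq]
      ring
    have h2 : ‖v‖^2 = ∑ j, (b.repr v j)^2 := by
      have := real_inner_self_eq_norm_sq v
      rw [← this, ← b.repr.inner_map_map v v, PiLp.inner_apply]
      refine Finset.sum_congr rfl fun j _ => ?_
      simp [RCLike.inner_apply, sq]
    rw [h1, h2, Finset.mul_sum]
    refine Finset.sum_le_sum fun j _ => ?_
    exact mul_le_mul_of_nonneg_right (hmin j) (sq_nonneg _)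
  -- projection inequality
  have hproj : ∀ x : EuclideanSpace ℝ (Fin n), ⟪P x - x, x - pstar⟫ ≤ 0 := by
    intro x
    have hconv : Convex ℝ B := hB ▸ convex_closedBall p0 δbar
    haveI : Nonempty B := ⟨⟨pstar, hpstar⟩⟩
    have h1 : ‖x - P x‖ ≤ ⨅ w : B, ‖x - (w : EuclideanSpace ℝ (Fin n))‖ :=
      le_ciInf fun w => (hP x).2 w w.2
    have h2 : (⨅ w : B, ‖x - (w : EuclideanSpace ℝ (Fin n))‖) ≤ ‖x - P x‖ :=
      ciInf_le ⟨0, by rintro _ ⟨w, rfl⟩; exact norm_nonneg _⟩ (⟨P x, (hP x).1⟩ : B)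
    have hiInf : ‖x - P x‖ = ⨅ w : B, ‖x - (w : EuclideanSpace ℝ (Fin n))‖ :=
      le_antisymm h1 h2
    have key : ⟪x - P x, pstar - P x⟫ ≤ 0 :=
      ((norm_eq_iInf_iff_real_inner_le_zero hconv (hP x).1).mp hiInf) pstar hpstar
    have e1 : P x - x = -(x - P x) := by abel
    have e2 : x - pstar = (x - P x) - (pstar - P x) := by abel
    rw [e1, e2, inner_neg_left, inner_sub_right]
    have h3 : (0:ℝ) ≤ ⟪x - P x, x - P x⟫ := real_inner_self_nonneg
    linarith
  -- the ODE argument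
  set D : ℝ → EuclideanSpace ℝ (Fin n) :=
    fun t => -mvec S (p t - pstar) + ε⁻¹ • (P (p t) - p t) with hD
  have hv : ∀ t ≥ (0:ℝ), HasDerivAt (fun s => p s - pstar) (D t) t :=
    fun t ht => (hp t ht).sub_const pstar
  set f : ℝ → ℝ := fun t => Real.exp (2*lam*t) * ⟪p t - pstar, p t - pstar⟫ with hf
  have hft : ∀ t ≥ (0:ℝ), HasDerivAt f
      (Real.exp (2*lam*t) * (2*lam) * ⟪p t - pstar, p t - pstar⟫
        + Real.exp (2*lam*t) * (⟪p t - pstar, D t⟫ + ⟪D t, p t - pstar⟫)) t := by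
    intro t ht
    have hexp : HasDerivAt (fun s => Real.exp (2*lam*s)) (Real.exp (2*lam*t) * (2*lam)) t := by
      simpa using ((hasDerivAt_id t).const_mul (2*lam)).exp
    exact hexp.mul ((hv t ht).inner ℝ (hv t ht))
  have hkey : ∀ t ≥ (0:ℝ), ⟪D t, p t - pstar⟫ ≤ -(lam * ‖p t - pstar‖^2) := by
    intro t ht
    have h1 := hquad (p t - pstar)
    have h2 := hproj (p t)
    have h3 : ⟪D t, p t - pstar⟫ = -⟪mvec S (p t - pstar), p t - pstar⟫
        + ε⁻¹ * ⟪P (p t) - p t, p t - pstar⟫ := by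
      rw [hD]
      rw [inner_add_left, inner_neg_left, real_inner_smul_left]
    rw [h3]
    have hε' : 0 ≤ ε⁻¹ := by positivity
    nlinarith [mul_nonpos_of_nonneg_of_nonpos hε' h2]
  have hderiv_nonpos : ∀ t ≥ (0:ℝ),
      Real.exp (2*lam*t) * (2*lam) * ⟪p t - pstar, p t - pstar⟫
        + Real.exp (2*lam*t) * (⟪p t - pstar, D t⟫ + ⟪D t, p t - pstar⟫) ≤ 0 := by
    intro t ht
    have h1 := hkey t ht
    have h2 : ⟪p t - pstar, D t⟫ = ⟪D t, p t - pstar⟫ := real_inner_comm _ _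
    have h3 : ⟪p t - pstar, p t - pstar⟫ = ‖p t - pstar‖^2 := real_inner_self_eq_norm_sq _
    have hepos : 0 < Real.exp (2*lam*t) := Real.exp_pos _
    rw [h2, h3]
    nlinarith
  have hanti : AntitoneOn f (Set.Ici (0:ℝ)) := by
    apply antitoneOn_of_deriv_nonpos (convex_Ici 0)
    · exact fun t ht => (hft t ht).continuousAt.continuousWithinAt
    · intro t ht
      rw [interior_Ici] at ht
      exact (hft t ht.le).differentiableAt.differentiableWithinAt
    · intro t ht
      rw [interior_Ici] at ht
      rw [(hft t ht.le).deriv]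
      exact hderiv_nonpos t ht.le
  have hmain : ∀ t ≥ (0:ℝ), ‖p t - pstar‖ ≤ Real.exp (-lam * t) * ‖p 0 - pstar‖ := by
    intro t ht
    have h0 := hanti Set.self_mem_Ici ht ht
    have hf0 : f 0 = ‖p 0 - pstar‖^2 := by
      simp only [hf]
      rw [real_inner_self_eq_norm_sq]
      norm_num
    have hft' : f t = Real.exp (2*lam*t) * ‖p t - pstar‖^2 := by
      simp only [hf]
      rw [real_inner_self_eq_norm_sq]
    rw [hf0, hft'] at h0
    have hee : Real.exp (-lam*t) * Real.exp (-lam*t) * Real.exp (2*lam*t) = 1 := by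
      rw [← Real.exp_add, ← Real.exp_add]
      ring_nf
      exact Real.exp_zero
    have hepos : 0 < Real.exp (2*lam*t) := Real.exp_pos _
    have he2 : 0 < Real.exp (-lam*t) := Real.exp_pos _
    have hn1 : 0 ≤ ‖p t - pstar‖ := norm_nonneg _
    have hn2 : 0 ≤ ‖p 0 - pstar‖ := norm_nonneg _
    have h5 := mul_le_mul_of_nonneg_left h0 (mul_pos he2 he2).le
    have h6 : (Real.exp (-lam*t)*Real.exp (-lam*t)*Real.exp (2*lam*t)) * ‖p t - pstar‖^2
        = ‖p t - pstar‖^2 := by rw [hee]; ring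
    have h4 : ‖p t - pstar‖^2 ≤ (Real.exp (-lam*t) * ‖p 0 - pstar‖)^2 := by
      nlinarith [h5, h6]
    have h7 := Real.sqrt_le_sqrt h4
    rwa [Real.sqrt_sq hn1, Real.sqrt_sq (mul_nonneg he2.le hn2)] at h7
  refine ⟨hlampos, hmain, ?_⟩
  rw [tendsto_iff_norm_sub_tendsto_zero]
  have hg : Filter.Tendsto (fun t => Real.exp (-lam * t) * ‖p 0 - pstar‖)
      Filter.atTop (nhds 0) := by
    have h1 : Filter.Tendsto (fun t : ℝ => lam * t) Filter.atTop Filter.atTop :=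
      Filter.Tendsto.const_mul_atTop hlampos Filter.tendsto_id
    have h2 : Filter.Tendsto (fun t : ℝ => Real.exp (-(lam * t))) Filter.atTop (nhds 0) :=
      Real.tendsto_exp_neg_atTop_nhds_zero.comp h1
    have h2' : Filter.Tendsto (fun t : ℝ => Real.exp (-lam * t)) Filter.atTop (nhds 0) := by
      simpa [Function.comp, neg_mul] using h2
    simpa using h2'.mul_const ‖p 0 - pstar‖
  exact squeeze_zero' (Filter.Eventually.of_forall fun t => norm_nonneg _)
    (Filter.eventually_atTop.2 ⟨0, fun t ht => hmain t ht⟩) hg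
end
end

section
/- Let Q be a symmetric positive definite real n×n matrix, let σ > 0, and let k₀ ≥ √n λ_max(Q)/λ_min(Q)². Then for every real n×n matrix K, σ_s(‖K‖_F) · Tr(Kᵀ Q⁻¹ (K + Q⁻¹)) ≥ 0. -/
open Matrix

noncomputable section

/-- The saturation function `σ_s` of the adaptive nudge mechanism. -/
def sigs (σ k0 u : ℝ) : ℝ :=
  if u < k0 then 0 else if u ≤ 2 * k0 then σ * (u / k0 - 1) else σ

/-- The Frobenius norm `‖M‖_F = √(Tr (Mᵀ M))` of a real matrix. -/
def frob {n : ℕ} (M : Matrix (Fin n) (Fin n) ℝ) : ℝ :=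
  Real.sqrt ((Mᵀ * M).trace)

lemma trace_nonneg_of_posSemidef {n : ℕ} {M : Matrix (Fin n) (Fin n) ℝ} (h : M.PosSemidef) :
    0 ≤ M.trace := by
  rw [Matrix.trace]
  refine Finset.sum_nonneg fun i _ => ?_
  simpa using h.dotProduct_mulVec_nonneg (Pi.single i 1)

lemma sigs_nonneg {σ k0 u : ℝ} (hσ : 0 < σ) (hk0 : 0 < k0) : 0 ≤ sigs σ k0 u := by
  unfold sigs
  split_ifs with h1 h2
  · exact le_rfl
  · have h3 : 1 ≤ u / k0 := (one_le_div hk0).mpr (not_lt.mp h1)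
    have h4 : 0 ≤ u / k0 - 1 := by linarith
    exact mul_nonneg hσ.le h4
  · exact hσ.le

lemma sigs_of_lt {σ k0 u : ℝ} (h : u < k0) : sigs σ k0 u = 0 := if_pos h

lemma trace_entry {n : ℕ} (A C : Matrix (Fin n) (Fin n) ℝ) :
    (Aᵀ * C).trace = ∑ p : Fin n × Fin n, A p.1 p.2 * C p.1 p.2 := by
  rw [Matrix.trace, Fintype.sum_prod_type]
  rw [Finset.sum_comm]
  simp [Matrix.diag, Matrix.mul_apply]

/-- If `k₀ ≥ √n λ_max(Q)/λ_min(Q)²`, then for every matrix `K`,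
`σ_s(‖K‖_F) · Tr(Kᵀ Q⁻¹ (K + Q⁻¹)) ≥ 0`. -/
theorem statement_12 (n : ℕ) (hn : 0 < n)
    (Q : Matrix (Fin n) (Fin n) ℝ) (hQ : Q.PosDef)
    (σ k0 : ℝ) (hσ : 0 < σ)
    (lammax lammin : ℝ)
    (hmax : lammax = ⨆ i, hQ.1.eigenvalues i)
    (hmin : lammin = ⨅ i, hQ.1.eigenvalues i)
    (hk0 : Real.sqrt n * lammax / lammin ^ 2 ≤ k0) :
    ∀ K : Matrix (Fin n) (Fin n) ℝ,
      0 ≤ sigs σ k0 (frob K) * (Kᵀ * Q⁻¹ * (K + Q⁻¹)).trace := by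
  intro K
  haveI : Nonempty (Fin n) := ⟨⟨0, hn⟩⟩
  set d := hQ.1.eigenvalues with hd
  set V : Matrix (Fin n) (Fin n) ℝ := (hQ.1.eigenvectorUnitary : Matrix (Fin n) (Fin n) ℝ) with hV
  have hVU : V ∈ Matrix.unitaryGroup (Fin n) ℝ := (hQ.1.eigenvectorUnitary).2
  have hV1 : Vᴴ * V = 1 := by
    rw [← Matrix.star_eq_conjTranspose]; exact Matrix.mem_unitaryGroup_iff'.mp hVU
  have hV2 : V * Vᴴ = 1 := by
    rw [← Matrix.star_eq_conjTranspose]; exact Matrix.mem_unitaryGroup_iff.mp hVU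
  have hspec : Q = V * Matrix.diagonal d * Vᴴ := by
    have := hQ.1.spectral_theorem
    simpa [RCLike.ofReal_real_eq_id, Matrix.star_eq_conjTranspose] using this
  have key : ∀ f g : Fin n → ℝ,
      (V * Matrix.diagonal f * Vᴴ) * (V * Matrix.diagonal g * Vᴴ)
        = V * Matrix.diagonal (fun i => f i * g i) * Vᴴ := by
    intro f g
    calc (V * Matrix.diagonal f * Vᴴ) * (V * Matrix.diagonal g * Vᴴ)
        = V * Matrix.diagonal f * (Vᴴ * V) * (Matrix.diagonal g * Vᴴ) := by
          simp only [Matrix.mul_assoc]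
      _ = V * (Matrix.diagonal f * Matrix.diagonal g) * Vᴴ := by
          rw [hV1]; simp only [Matrix.mul_one, Matrix.mul_assoc]
      _ = V * Matrix.diagonal (fun i => f i * g i) * Vᴴ := by
          rw [Matrix.diagonal_mul_diagonal]
  have hdpos : ∀ i, 0 < d i := hQ.eigenvalues_pos
  have hQinv : Q⁻¹ = V * Matrix.diagonal (fun i => (d i)⁻¹) * Vᴴ := by
    apply Matrix.inv_eq_right_inv
    rw [hspec, key]
    have : (fun i => d i * (d i)⁻¹) = fun _ => (1:ℝ) := by
      funext i; exact mul_inv_cancel₀ (hdpos i).ne'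
    rw [this, Matrix.diagonal_one, Matrix.mul_one, hV2]
  have tr_conj : ∀ f : Fin n → ℝ, (V * Matrix.diagonal f * Vᴴ).trace = ∑ i, f i := by
    intro f
    rw [Matrix.trace_mul_cycle, hV1, Matrix.one_mul, Matrix.trace_diagonal]
  -- eigenvalue bounds
  have hminle : ∀ i, lammin ≤ d i := fun i => hmin ▸ ciInf_le (Set.Finite.bddBelow (Set.finite_range d)) i
  have hlemax : ∀ i, d i ≤ lammax := fun i => hmax ▸ le_ciSup (Set.Finite.bddAbove (Set.finite_range d)) i
  have hminpos : 0 < lammin := by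
    obtain ⟨i, hi⟩ := exists_eq_ciInf_of_finite (f := d)
    rw [hmin, ← hi]; exact hdpos i
  have hmaxpos : 0 < lammax :=
    lt_of_lt_of_le ((hminpos).trans_le (hminle (Classical.arbitrary _))) (hlemax _)
  have hk0pos : 0 < k0 := by
    refine lt_of_lt_of_le ?_ hk0
    have hs : 0 < Real.sqrt n := Real.sqrt_pos.mpr (by exact_mod_cast hn)
    positivity
  -- key matrices
  have hfun : (fun i => (d i)⁻¹ * (d i)⁻¹) = fun i => ((d i) ^ 2)⁻¹ := by
    funext i; rw [sq, mul_inv]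
  have hBdef : Q⁻¹ * Q⁻¹ = V * Matrix.diagonal (fun i => ((d i) ^ 2)⁻¹) * Vᴴ := by
    rw [hQinv, key, hfun]
  set S := (Kᵀ * K).trace with hSdef
  have hSsum : S = ∑ p : Fin n × Fin n, K p.1 p.2 ^ 2 := by
    rw [hSdef, trace_entry]; simp [sq]
  have hSnonneg : 0 ≤ S := by
    rw [hSsum]; exact Finset.sum_nonneg fun p _ => sq_nonneg _
  set t := frob K with ht
  have ht2 : t ^ 2 = S := Real.sq_sqrt hSnonneg
  have htnn : 0 ≤ t := Real.sqrt_nonneg _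
  -- T1 lower bound
  have hNeq : Q⁻¹ - lammax⁻¹ • (1 : Matrix (Fin n) (Fin n) ℝ)
      = V * Matrix.diagonal (fun i => (d i)⁻¹ - lammax⁻¹) * Vᴴ := by
    have hdiag : Matrix.diagonal (fun _ : Fin n => lammax⁻¹)
        = lammax⁻¹ • (1 : Matrix (Fin n) (Fin n) ℝ) := by
      ext i j
      rcases eq_or_ne i j with h | h
      · subst h; simp
      · simp [Matrix.diagonal_apply_ne _ h, Matrix.one_apply_ne h]
    have h1 : lammax⁻¹ • (1 : Matrix (Fin n) (Fin n) ℝ)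
        = V * Matrix.diagonal (fun _ => lammax⁻¹) * Vᴴ := by
      rw [hdiag, Matrix.mul_smul, Matrix.mul_one, Matrix.smul_mul, hV2]
    rw [hQinv, h1, ← Matrix.sub_mul, ← Matrix.mul_sub, Matrix.diagonal_sub]
  have hNpsd : (Q⁻¹ - lammax⁻¹ • (1 : Matrix (Fin n) (Fin n) ℝ)).PosSemidef := by
    rw [hNeq]
    refine (Matrix.posSemidef_diagonal_iff.mpr fun i => ?_).mul_mul_conjTranspose_same V
    have := one_div_le_one_div_of_le (hdpos i) (hlemax i)
    simp only [one_div] at this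
    linarith
  have hT1 : lammax⁻¹ * S ≤ (Kᵀ * Q⁻¹ * K).trace := by
    have h := trace_nonneg_of_posSemidef (hNpsd.conjTranspose_mul_mul_same K)
    have hexp : Kᴴ * (Q⁻¹ - lammax⁻¹ • (1 : Matrix (Fin n) (Fin n) ℝ)) * K
        = Kᵀ * Q⁻¹ * K - lammax⁻¹ • (Kᵀ * K) := by
      rw [Matrix.conjTranspose_eq_transpose_of_trivial, Matrix.mul_sub, Matrix.sub_mul]
      congr 1
      rw [Matrix.mul_smul, Matrix.mul_one, Matrix.smul_mul]
    rw [hexp, Matrix.trace_sub, Matrix.trace_smul, smul_eq_mul] at h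
    linarith
  -- cross term bound
  set c : ℝ := (lammin ^ 2)⁻¹ with hc
  have hcpos : 0 < c := by positivity
  have hB2 : (∑ p : Fin n × Fin n, ((Q⁻¹ * Q⁻¹) p.1 p.2) ^ 2) ≤ n * c ^ 2 := by
    have hBsymm : (Q⁻¹ * Q⁻¹)ᵀ = Q⁻¹ * Q⁻¹ := by
      rw [← Matrix.conjTranspose_eq_transpose_of_trivial, hBdef]
      simp [Matrix.conjTranspose_mul, Matrix.diagonal_conjTranspose, Matrix.mul_assoc]
    have hBB : (Q⁻¹ * Q⁻¹) * (Q⁻¹ * Q⁻¹)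
        = V * Matrix.diagonal (fun i => ((d i) ^ 2)⁻¹ * ((d i) ^ 2)⁻¹) * Vᴴ := by
      rw [hBdef, key]
    have heq : (∑ p : Fin n × Fin n, ((Q⁻¹ * Q⁻¹) p.1 p.2) ^ 2)
        = ∑ i, (((d i) ^ 2)⁻¹) ^ 2 := by
      have h0 := trace_entry (Q⁻¹ * Q⁻¹) (Q⁻¹ * Q⁻¹)
      rw [hBsymm, hBB, tr_conj] at h0
      calc (∑ p : Fin n × Fin n, ((Q⁻¹ * Q⁻¹) p.1 p.2) ^ 2)
          = ∑ p : Fin n × Fin n, (Q⁻¹ * Q⁻¹) p.1 p.2 * (Q⁻¹ * Q⁻¹) p.1 p.2 := by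
            simp [sq]
        _ = ∑ i, (((d i) ^ 2)⁻¹) ^ 2 := by rw [← h0]; simp [sq]
    rw [heq]
    calc (∑ i, (((d i) ^ 2)⁻¹) ^ 2) ≤ ∑ _i : Fin n, c ^ 2 := by
          refine Finset.sum_le_sum fun i _ => ?_
          have h1 : lammin ^ 2 ≤ d i ^ 2 := by
            have := hminle i; nlinarith [hminpos]
          have h2 : ((d i) ^ 2)⁻¹ ≤ c := by
            rw [hc]; exact inv_anti₀ (by positivity) h1
          have h3 : (0:ℝ) ≤ ((d i) ^ 2)⁻¹ := by positivity
          nlinarith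
      _ = n * c ^ 2 := by simp [mul_comm]
  have hT2 : -(t * (Real.sqrt n * c)) ≤ (Kᵀ * (Q⁻¹ * Q⁻¹)).trace := by
    rw [trace_entry]
    set x := ∑ p : Fin n × Fin n, K p.1 p.2 * (Q⁻¹ * Q⁻¹) p.1 p.2 with hx
    have hcs := Finset.sum_mul_sq_le_sq_mul_sq Finset.univ
      (fun p : Fin n × Fin n => K p.1 p.2) (fun p => (Q⁻¹ * Q⁻¹) p.1 p.2)
    have hxb : x ^ 2 ≤ S * (n * c ^ 2) := by
      refine le_trans hcs ?_
      rw [← hSsum]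
      exact mul_le_mul_of_nonneg_left hB2 hSnonneg
    have habs : |x| ≤ t * (Real.sqrt n * c) := by
      have h1 : |x| = Real.sqrt (x ^ 2) := (Real.sqrt_sq_eq_abs x).symm
      rw [h1]
      have h2 : Real.sqrt (x ^ 2) ≤ Real.sqrt (S * (n * c ^ 2)) := Real.sqrt_le_sqrt hxb
      refine le_trans h2 (le_of_eq ?_)
      rw [Real.sqrt_mul hSnonneg, Real.sqrt_mul (by positivity : (0:ℝ) ≤ (n:ℝ)),
        Real.sqrt_sq hcpos.le]
      rfl
    linarith [neg_abs_le x, habs]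
  -- combine
  have htr : (Kᵀ * Q⁻¹ * (K + Q⁻¹)).trace
      = (Kᵀ * Q⁻¹ * K).trace + (Kᵀ * (Q⁻¹ * Q⁻¹)).trace := by
    rw [Matrix.mul_add, Matrix.trace_add]
    congr 2
    rw [Matrix.mul_assoc]
  have hmain : frob K < k0 ∨ 0 ≤ (Kᵀ * Q⁻¹ * (K + Q⁻¹)).trace := by
    by_cases hlt : frob K < k0
    · exact Or.inl hlt
    · push_neg at hlt
      right
      have htk : k0 ≤ t := hlt
      have hratio : Real.sqrt n * c ≤ t * lammax⁻¹ := by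
        have h1 : Real.sqrt n * lammax / lammin ^ 2 ≤ t := le_trans hk0 htk
        have h2 : Real.sqrt n * lammax * c ≤ t := by
          rw [hc]; rw [div_eq_mul_inv] at h1; exact h1
        calc Real.sqrt n * c = (Real.sqrt n * lammax * c) * lammax⁻¹ := by
              field_simp
          _ ≤ t * lammax⁻¹ := by
              exact mul_le_mul_of_nonneg_right h2 (by positivity)
      have h3 : t * (Real.sqrt n * c) ≤ t * (t * lammax⁻¹) :=
        mul_le_mul_of_nonneg_left hratio htnn
      rw [htr]
      have h4 : t * (t * lammax⁻¹) = lammax⁻¹ * S := by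
        rw [← ht2]; ring
      linarith
  rcases hmain with hlt | hge
  · rw [sigs_of_lt hlt, zero_mul]
  · exact mul_nonneg (sigs_nonneg hσ hk0pos) hge
end
end

section
/- Let σ > 0, τ > 0, ε > 0, and k₀ ≥ √n λ_max(S)/λ_min(S)². Let p* ∈ B, p̂ ∈ ℝ^n, and set p̃ := p̂ − p*. Let K be a real n×n matrix, set Φ := K + S⁻¹, and let v ∈ ℝ^n. Then ⟨p̃, −S p̃ + Φ v + ε⁻¹ (P_B(p̂) − p̂)⟩ − Tr((S p̃ vᵀ + σ_s(‖K‖_F) K)ᵀ S⁻¹ Φ) ≤ −p̃ᵀ S p̃. -/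
open scoped RealInnerProductSpace
open Matrix

noncomputable section

/-- Variational inequality for a metric projection onto a convex set. -/
lemma proj_inner_le {E : Type*} [NormedAddCommGroup E] [InnerProductSpace ℝ E]
    {C : Set E} (hC : Convex ℝ C) {x m q : E} (hm : m ∈ C) (hq : q ∈ C)
    (hmin : ∀ y ∈ C, ‖x - m‖ ≤ ‖x - y‖) : ⟪x - q, m - x⟫ ≤ 0 := by
  set a := x - m with ha
  set b := x - q with hb
  have key : ∀ t : ℝ, 0 < t → t ≤ 1 → ‖a‖ ^ 2 - ⟪a, b⟫ ≤ t * ‖a - b‖ ^ 2 / 2 := by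
    intro t ht ht1
    have hy : (1 - t) • m + t • q ∈ C := hC hm hq (by linarith) ht.le (by ring)
    have h1 : ‖x - ((1 - t) • m + t • q)‖ = ‖a - t • (a - b)‖ := by
      congr 1
      have : (1 - t) • m + t • q = m + t • (q - m) := by
        rw [smul_sub]; module
      rw [this, ha, hb]
      module
    have h2 := hmin _ hy
    rw [h1] at h2
    have h3 : ‖a‖ ^ 2 ≤ ‖a - t • (a - b)‖ ^ 2 := by
      have := norm_nonneg a
      nlinarith [norm_nonneg (a - t • (a - b))]
    have h4 : ‖a - t • (a - b)‖ ^ 2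
        = ‖a‖ ^ 2 - 2 * (t * ⟪a, a - b⟫) + t ^ 2 * ‖a - b‖ ^ 2 := by
      rw [norm_sub_sq_real, real_inner_smul_right, norm_smul]
      simp only [Real.norm_eq_abs, abs_of_pos ht]
      ring
    have h5 : ⟪a, a - b⟫ = ‖a‖ ^ 2 - ⟪a, b⟫ := by
      rw [inner_sub_right, real_inner_self_eq_norm_sq]
    rw [h4, h5] at h3
    nlinarith
  have main : ‖a‖ ^ 2 - ⟪a, b⟫ ≤ 0 := by
    by_contra h
    push_neg at h
    set c := ‖a‖ ^ 2 - ⟪a, b⟫ with hc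
    set D := ‖a - b‖ ^ 2 with hD
    have hD0 : 0 ≤ D := sq_nonneg _
    have ht : (0:ℝ) < min 1 (c / (D + 1)) := by
      apply lt_min one_pos
      positivity
    have := key _ ht (min_le_left _ _)
    have h2 : min 1 (c / (D + 1)) ≤ c / (D + 1) := min_le_right _ _
    have h3 : min 1 (c / (D + 1)) * D / 2 ≤ (c / (D + 1)) * D / 2 := by
      have := mul_le_mul_of_nonneg_right h2 hD0
      linarith
    have h4 : (c / (D + 1)) * D / 2 < c := by
      rw [div_mul_eq_mul_div, div_div]
      rw [div_lt_iff₀ (by positivity)]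
      nlinarith
    linarith
  have : 0 ≤ ⟪a, b⟫ := le_trans (sq_nonneg ‖a‖) (by linarith)
  have hmx : m - x = -a := by rw [ha]; abel
  rw [hmx, inner_neg_right, real_inner_comm]
  linarith

lemma trace_diag_mul {n : ℕ} (d : Fin n → ℝ) (M : Matrix (Fin n) (Fin n) ℝ) :
    (Matrix.diagonal d * M).trace = ∑ i, d i * M i i := by
  simp [Matrix.trace, Matrix.diag, Matrix.diagonal_mul]

lemma trace_vecMulVec_mul {n : ℕ} (a v : Fin n → ℝ) (M : Matrix (Fin n) (Fin n) ℝ) :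
    ((Matrix.vecMulVec a v)ᵀ * M).trace = a ⬝ᵥ (M *ᵥ v) := by
  have hT : (Matrix.vecMulVec a v)ᵀ = Matrix.vecMulVec v a := by
    ext i j; simp [Matrix.vecMulVec_apply, mul_comm]
  rw [hT]
  simp only [Matrix.trace, Matrix.diag, Matrix.mul_apply, Matrix.vecMulVec_apply,
    dotProduct, Matrix.mulVec, Finset.mul_sum]
  rw [Finset.sum_comm]
  apply Finset.sum_congr rfl
  intro j _
  apply Finset.sum_congr rfl
  intro i _
  ring

lemma sum_abs_le_sqrt {n : ℕ} (a : Fin n → ℝ) :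
    ∑ i, |a i| ≤ Real.sqrt n * Real.sqrt (∑ i, (a i) ^ 2) := by
  have h := Finset.sum_mul_sq_le_sq_mul_sq Finset.univ (fun _ => (1:ℝ)) (fun i => |a i|)
  simp only [one_pow, one_mul, Finset.sum_const, Finset.card_univ, Fintype.card_fin,
    nsmul_eq_mul] at h
  have h2 : (∑ i, |a i|) ^ 2 ≤ n * ∑ i, (a i) ^ 2 := by
    calc (∑ i, |a i|) ^ 2 ≤ (n:ℝ) * ∑ i, |a i| ^ 2 := by linarith
    _ = n * ∑ i, (a i) ^ 2 := by simp [sq_abs]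
  calc ∑ i, |a i| = Real.sqrt ((∑ i, |a i|) ^ 2) := by
        rw [Real.sqrt_sq (Finset.sum_nonneg fun i _ => abs_nonneg _)]
    _ ≤ Real.sqrt ((n:ℝ) * ∑ i, (a i) ^ 2) := Real.sqrt_le_sqrt h2
    _ = Real.sqrt n * Real.sqrt (∑ i, (a i) ^ 2) := Real.sqrt_mul (Nat.cast_nonneg n) _

lemma trace_sq_nonneg {n : ℕ} (K : Matrix (Fin n) (Fin n) ℝ) : 0 ≤ (Kᵀ * K).trace := by
  simp only [Matrix.trace, Matrix.diag, Matrix.mul_apply, Matrix.transpose_apply]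
  apply Finset.sum_nonneg; intro i _
  apply Finset.sum_nonneg; intro j _
  exact mul_self_nonneg _

/-- `Tr(Kᵀ (U D⁻¹ Uᵀ) K) ≥ Tr(Kᵀ K)/λmax`. -/
lemma term1_bound {n : ℕ} (U K : Matrix (Fin n) (Fin n) ℝ) (e : Fin n → ℝ)
    (hU2 : U * Uᵀ = 1) (lmax : ℝ) (hl : 0 < lmax)
    (he : ∀ i, 0 < e i) (he2 : ∀ i, e i ≤ lmax) :
    (Kᵀ * K).trace / lmax
      ≤ (Kᵀ * (U * Matrix.diagonal (fun i => (e i)⁻¹) * Uᵀ) * K).trace := by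
  set G := Uᵀ * K with hG
  have h1 : Kᵀ * (U * Matrix.diagonal (fun i => (e i)⁻¹) * Uᵀ) * K
      = (Kᵀ * U) * (Matrix.diagonal (fun i => (e i)⁻¹) * G) := by
    rw [hG]; noncomm_ring
  have h2 : ((Kᵀ * U) * (Matrix.diagonal (fun i => (e i)⁻¹) * G)).trace
      = (Matrix.diagonal (fun i => (e i)⁻¹) * (G * Gᵀ)).trace := by
    rw [Matrix.trace_mul_comm]
    congr 1
    have hGT : Gᵀ = Kᵀ * U := by rw [hG]; simp [Matrix.transpose_mul]
    rw [← hGT]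
    noncomm_ring
  have h3 : (Matrix.diagonal (fun i => (e i)⁻¹) * (G * Gᵀ)).trace
      = ∑ i, (e i)⁻¹ * ∑ j, (G i j) ^ 2 := by
    rw [trace_diag_mul]
    apply Finset.sum_congr rfl
    intro i _
    congr 1
    simp [Matrix.mul_apply, sq]
  have h4 : ∑ i, ∑ j, (G i j) ^ 2 = (Kᵀ * K).trace := by
    have : (G * Gᵀ).trace = (Kᵀ * K).trace := by
      rw [hG]
      have hGT : (Uᵀ * K)ᵀ = Kᵀ * U := by simp [Matrix.transpose_mul]
      rw [hGT]
      calc (Uᵀ * K * (Kᵀ * U)).trace = (Uᵀ * (K * Kᵀ * U)).trace := by noncomm_ring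
        _ = ((K * Kᵀ * U) * Uᵀ).trace := Matrix.trace_mul_comm _ _
        _ = (K * Kᵀ).trace := by rw [Matrix.mul_assoc, hU2, Matrix.mul_one]
        _ = (Kᵀ * K).trace := Matrix.trace_mul_comm _ _
    rw [← this]
    simp [Matrix.trace, Matrix.diag, Matrix.mul_apply, sq]
  rw [h1, h2, h3]
  have hstep : ∀ i : Fin n, lmax⁻¹ * ∑ j, (G i j) ^ 2 ≤ (e i)⁻¹ * ∑ j, (G i j) ^ 2 := by
    intro i
    apply mul_le_mul_of_nonneg_right
    · exact inv_anti₀ (he i) (he2 i)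
    · exact Finset.sum_nonneg fun j _ => sq_nonneg _
  calc (Kᵀ * K).trace / lmax = ∑ i, lmax⁻¹ * ∑ j, (G i j) ^ 2 := by
        rw [← Finset.mul_sum, h4]; rw [div_eq_inv_mul]
    _ ≤ ∑ i, (e i)⁻¹ * ∑ j, (G i j) ^ 2 := Finset.sum_le_sum fun i _ => hstep i

/-- `Tr(Kᵀ (U D⁻¹ Uᵀ)(U D⁻¹ Uᵀ)) ≥ -√n ‖K‖_F / λmin²`. -/
lemma term2_bound {n : ℕ} (U K : Matrix (Fin n) (Fin n) ℝ) (e : Fin n → ℝ)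
    (hU1 : Uᵀ * U = 1) (hU2 : U * Uᵀ = 1) (lmin : ℝ) (hl : 0 < lmin)
    (he : ∀ i, lmin ≤ e i) :
    -(Real.sqrt n * Real.sqrt ((Kᵀ * K).trace) / lmin ^ 2)
      ≤ (Kᵀ * (U * Matrix.diagonal (fun i => (e i)⁻¹) * Uᵀ)
          * (U * Matrix.diagonal (fun i => (e i)⁻¹) * Uᵀ)).trace := by
  set H := Uᵀ * Kᵀ * U with hH
  have hsq : Kᵀ * (U * Matrix.diagonal (fun i => (e i)⁻¹) * Uᵀ)
        * (U * Matrix.diagonal (fun i => (e i)⁻¹) * Uᵀ)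
      = Kᵀ * (U * Matrix.diagonal (fun i => (e i)⁻¹ * (e i)⁻¹) * Uᵀ) := by
    have : Matrix.diagonal (fun i => (e i)⁻¹) * Matrix.diagonal (fun i => (e i)⁻¹)
        = Matrix.diagonal (fun i => (e i)⁻¹ * (e i)⁻¹) := by
      rw [Matrix.diagonal_mul_diagonal]
    calc Kᵀ * (U * Matrix.diagonal (fun i => (e i)⁻¹) * Uᵀ)
          * (U * Matrix.diagonal (fun i => (e i)⁻¹) * Uᵀ)
        = Kᵀ * (U * (Matrix.diagonal (fun i => (e i)⁻¹) * ((Uᵀ * U)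
            * (Matrix.diagonal (fun i => (e i)⁻¹) * Uᵀ)))) := by noncomm_ring
      _ = Kᵀ * (U * (Matrix.diagonal (fun i => (e i)⁻¹)
            * (Matrix.diagonal (fun i => (e i)⁻¹) * Uᵀ))) := by rw [hU1, Matrix.one_mul]
      _ = Kᵀ * (U * Matrix.diagonal (fun i => (e i)⁻¹ * (e i)⁻¹) * Uᵀ) := by
            rw [← Matrix.mul_assoc (Matrix.diagonal _), this]; noncomm_ring
  have htr : (Kᵀ * (U * Matrix.diagonal (fun i => (e i)⁻¹ * (e i)⁻¹) * Uᵀ)).trace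
      = ∑ i, ((e i)⁻¹ * (e i)⁻¹) * H i i := by
    have h1 : Kᵀ * (U * Matrix.diagonal (fun i => (e i)⁻¹ * (e i)⁻¹) * Uᵀ)
        = (Kᵀ * U) * (Matrix.diagonal (fun i => (e i)⁻¹ * (e i)⁻¹) * Uᵀ) := by noncomm_ring
    rw [h1, Matrix.trace_mul_comm]
    rw [show (Matrix.diagonal (fun i => (e i)⁻¹ * (e i)⁻¹) * Uᵀ) * (Kᵀ * U)
      = Matrix.diagonal (fun i => (e i)⁻¹ * (e i)⁻¹) * H by rw [hH]; noncomm_ring]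
    rw [trace_diag_mul]
  have hHfrob : ∑ i, ∑ j, (H i j) ^ 2 = (Kᵀ * K).trace := by
    have h2 : (Hᵀ * H).trace = (Kᵀ * K).trace := by
      have hHT : Hᵀ = Uᵀ * K * U := by rw [hH]; simp [Matrix.transpose_mul, Matrix.mul_assoc]
      calc (Hᵀ * H).trace = (Uᵀ * K * U * (Uᵀ * (Kᵀ * U))).trace := by
            rw [hHT, hH]; noncomm_ring
        _ = (Uᵀ * (K * ((U * Uᵀ) * (Kᵀ * U)))).trace := by noncomm_ring
        _ = (Uᵀ * (K * (Kᵀ * U))).trace := by rw [hU2, Matrix.one_mul]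
        _ = ((K * (Kᵀ * U)) * Uᵀ).trace := Matrix.trace_mul_comm _ _
        _ = (K * Kᵀ).trace := by rw [show K * (Kᵀ * U) * Uᵀ = K * Kᵀ * (U * Uᵀ) by
              noncomm_ring, hU2, Matrix.mul_one]
        _ = (Kᵀ * K).trace := Matrix.trace_mul_comm _ _
    rw [← h2]
    rw [Finset.sum_comm]
    simp [Matrix.trace, Matrix.diag, Matrix.mul_apply, sq]
  rw [hsq, htr]
  have hbound : ∀ i : Fin n, -((lmin^2)⁻¹ * |H i i|) ≤ ((e i)⁻¹ * (e i)⁻¹) * H i i := by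
    intro i
    have hei : 0 < e i := lt_of_lt_of_le hl (he i)
    have h1 : ((e i)⁻¹ * (e i)⁻¹) * H i i ≥ -(((e i)⁻¹ * (e i)⁻¹) * |H i i|) := by
      have := neg_abs_le (H i i)
      have hpos : 0 ≤ (e i)⁻¹ * (e i)⁻¹ := by positivity
      nlinarith [abs_nonneg (H i i)]
    have h2 : ((e i)⁻¹ * (e i)⁻¹) * |H i i| ≤ (lmin^2)⁻¹ * |H i i| := by
      apply mul_le_mul_of_nonneg_right _ (abs_nonneg _)
      rw [sq]
      rw [mul_inv]
      exact mul_le_mul (inv_anti₀ hl (he i)) (inv_anti₀ hl (he i))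
        (by positivity) (by positivity)
    linarith
  have hsum : -((lmin^2)⁻¹ * ∑ i, |H i i|) ≤ ∑ i, ((e i)⁻¹ * (e i)⁻¹) * H i i := by
    calc -((lmin^2)⁻¹ * ∑ i, |H i i|) = ∑ i, -((lmin^2)⁻¹ * |H i i|) := by
          simp [Finset.mul_sum]
    _ ≤ _ := Finset.sum_le_sum fun i _ => hbound i
  refine le_trans ?_ hsum
  have hmain : ∑ i, |H i i| ≤ Real.sqrt n * Real.sqrt ((Kᵀ * K).trace) := by
    calc ∑ i, |H i i| ≤ Real.sqrt n * Real.sqrt (∑ i, (H i i) ^ 2) := sum_abs_le_sqrt _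
    _ ≤ Real.sqrt n * Real.sqrt ((Kᵀ * K).trace) := by
        apply mul_le_mul_of_nonneg_left _ (Real.sqrt_nonneg _)
        apply Real.sqrt_le_sqrt
        rw [← hHfrob]
        apply Finset.sum_le_sum
        intro i _
        exact Finset.single_le_sum (fun j _ => sq_nonneg (H i j)) (Finset.mem_univ i)
  rw [neg_le_neg_iff, div_eq_inv_mul]
  exact mul_le_mul_of_nonneg_left hmain (by positivity)

lemma inner_mvec {n : ℕ} (x y : EuclideanSpace ℝ (Fin n)) (M : Matrix (Fin n) (Fin n) ℝ) :
    ⟪x, mvec M y⟫ = (x : Fin n → ℝ) ⬝ᵥ (M *ᵥ (y : Fin n → ℝ)) := by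
  simp only [PiLp.inner_apply, RCLike.inner_apply, mvec, Matrix.toEuclideanLin_apply,
    dotProduct, conj_trivial]
  exact Finset.sum_congr rfl fun _ _ => mul_comm _ _

/-- Lyapunov decrease along the adaptive nudge dynamics (full-trust phase):
with `p̃ = p̂ − p*`, `Φ = K + S⁻¹`, and `k₀ ≥ √n λ_max(S)/λ_min(S)²`,
`⟨p̃, −S p̃ + Φ v + ε⁻¹(P_B(p̂) − p̂)⟩ − Tr((S p̃ vᵀ + σ_s(‖K‖_F) K)ᵀ S⁻¹ Φ)
  ≤ −p̃ᵀ S p̃`. -/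
theorem statement_14 (n N : ℕ) (hn : 0 < n) (hN : 0 < N)
    (Q : Fin N → Matrix (Fin n) (Fin n) ℝ) (hQ : ∀ i, (Q i).PosDef)
    (S : Matrix (Fin n) (Fin n) ℝ) (hS : S = ∑ i, (Q i)⁻¹) (hSH : S.IsHermitian)
    (p0 : EuclideanSpace ℝ (Fin n)) (δbar : ℝ) (hδ : 0 < δbar)
    (B : Set (EuclideanSpace ℝ (Fin n))) (hB : B = Metric.closedBall p0 δbar)
    (P : EuclideanSpace ℝ (Fin n) → EuclideanSpace ℝ (Fin n))
    (hP : ∀ x, P x ∈ B ∧ ∀ y ∈ B, ‖x - P x‖ ≤ ‖x - y‖)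
    (σ τ ε k0 : ℝ) (hσ : 0 < σ) (hτ : 0 < τ) (hε : 0 < ε)
    (lammax lammin : ℝ)
    (hmax : lammax = ⨆ i, hSH.eigenvalues i)
    (hmin : lammin = ⨅ i, hSH.eigenvalues i)
    (hk0 : Real.sqrt n * lammax / lammin ^ 2 ≤ k0)
    (pstar : EuclideanSpace ℝ (Fin n)) (hpstar : pstar ∈ B)
    (phat : EuclideanSpace ℝ (Fin n))
    (ptil : EuclideanSpace ℝ (Fin n)) (hptil : ptil = phat - pstar)
    (K Φ : Matrix (Fin n) (Fin n) ℝ) (hΦ : Φ = K + S⁻¹)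
    (v : EuclideanSpace ℝ (Fin n)) :
    ⟪ptil, -mvec S ptil + mvec Φ v + ε⁻¹ • (P phat - phat)⟫ -
        ((Matrix.vecMulVec (mvec S ptil) v + sigs σ k0 (frob K) • K)ᵀ * S⁻¹ * Φ).trace ≤
      -⟪ptil, mvec S ptil⟫ := by
  have hnE : Nonempty (Fin n) := ⟨⟨0, hn⟩⟩
  have hNE : Nonempty (Fin N) := ⟨⟨0, hN⟩⟩
  -- S is positive definite
  have hSpd : S.PosDef := by
    refine Matrix.posDef_iff_dotProduct_mulVec.2 ⟨hSH, fun x hx => ?_⟩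
    have h1 : S *ᵥ x = ∑ i, ((Q i)⁻¹ *ᵥ x) := by
      rw [hS]; ext j
      simp only [Matrix.mulVec, dotProduct, Finset.sum_apply, Matrix.sum_apply,
        Finset.sum_mul]
      rw [Finset.sum_comm]
    rw [h1]
    have h2 : star x ⬝ᵥ ∑ i, ((Q i)⁻¹ *ᵥ x) = ∑ i, star x ⬝ᵥ ((Q i)⁻¹ *ᵥ x) := by
      simp only [dotProduct, Finset.sum_apply, Finset.mul_sum]
      rw [Finset.sum_comm]
    rw [h2]
    exact Finset.sum_pos (fun i _ => ((hQ i).inv).dotProduct_mulVec_pos hx) Finset.univ_nonempty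
  have hdet : IsUnit S.det := isUnit_iff_ne_zero.2 hSpd.det_pos.ne'
  have hSinvS : S * S⁻¹ = 1 := Matrix.mul_nonsing_inv S hdet
  set e : Fin n → ℝ := hSH.eigenvalues with he_def
  have hepos : ∀ i, 0 < e i := fun i => hSpd.eigenvalues_pos i
  have hle_max : ∀ i, e i ≤ lammax := by
    intro i; rw [hmax]; exact le_ciSup (Set.Finite.bddAbove (Set.finite_range e)) i
  have hge_min : ∀ i, lammin ≤ e i := by
    intro i; rw [hmin]; exact ciInf_le (Set.Finite.bddBelow (Set.finite_range e)) i
  have hlmin_pos : 0 < lammin := by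
    obtain ⟨j, hj⟩ := exists_eq_ciInf_of_finite (f := e)
    rw [hmin, ← hj]; exact hepos j
  have hlmax_pos : 0 < lammax :=
    lt_of_lt_of_le hlmin_pos (le_trans (hge_min ⟨0, hn⟩) (hle_max ⟨0, hn⟩))
  -- spectral decomposition
  set U : Matrix (Fin n) (Fin n) ℝ := (hSH.eigenvectorUnitary : Matrix (Fin n) (Fin n) ℝ)
    with hU_def
  have hstar : star U = Uᵀ := by
    ext i j; simp [Matrix.star_eq_conjTranspose, Matrix.conjTranspose_apply]
  have hU1 : Uᵀ * U = 1 := by rw [← hstar]; exact Unitary.coe_star_mul_self _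
  have hU2 : U * Uᵀ = 1 := by rw [← hstar]; exact Unitary.coe_mul_star_self _
  have hspec : S = U * Matrix.diagonal e * Uᵀ := by
    rw [← hstar]
    simpa [Function.comp] using hSH.spectral_theorem
  have hSinv : S⁻¹ = U * Matrix.diagonal (fun i => (e i)⁻¹) * Uᵀ := by
    apply Matrix.inv_eq_right_inv
    rw [hspec]
    have hdd : Matrix.diagonal e * Matrix.diagonal (fun i => (e i)⁻¹) = 1 := by
      rw [Matrix.diagonal_mul_diagonal]
      have : (fun i => e i * (e i)⁻¹) = fun _ => (1:ℝ) :=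
        funext fun i => mul_inv_cancel₀ (hepos i).ne'
      rw [this, Matrix.diagonal_one]
    calc U * Matrix.diagonal e * Uᵀ * (U * Matrix.diagonal (fun i => (e i)⁻¹) * Uᵀ)
        = U * (Matrix.diagonal e * ((Uᵀ * U)
            * (Matrix.diagonal (fun i => (e i)⁻¹) * Uᵀ))) := by noncomm_ring
      _ = U * ((Matrix.diagonal e * Matrix.diagonal (fun i => (e i)⁻¹)) * Uᵀ) := by
          rw [hU1, Matrix.one_mul]; noncomm_ring
      _ = U * Uᵀ := by rw [hdd, Matrix.one_mul]
      _ = 1 := hU2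
  -- transpose symmetry
  have hSsym : Sᵀ = S := by
    have h2 := hSH.eq
    ext i j; have := congrFun (congrFun h2 i) j
    simpa [Matrix.conjTranspose_apply] using this
  set sg : ℝ := sigs σ k0 (frob K) with hsg_def
  -- trace decomposition
  have htr_split : ((Matrix.vecMulVec (mvec S ptil) v + sg • K)ᵀ * S⁻¹ * Φ).trace
      = ((Matrix.vecMulVec (mvec S ptil) v)ᵀ * (S⁻¹ * Φ)).trace
        + sg * (Kᵀ * S⁻¹ * Φ).trace := by
    rw [Matrix.transpose_add, Matrix.add_mul, Matrix.add_mul, Matrix.trace_add,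
      Matrix.transpose_smul, Matrix.smul_mul, Matrix.smul_mul, Matrix.trace_smul,
      Matrix.mul_assoc]
    simp [smul_eq_mul]
  -- cancellation of the coupling term
  have hcancel : ((Matrix.vecMulVec (mvec S ptil) v)ᵀ * (S⁻¹ * Φ)).trace
      = ⟪ptil, mvec Φ v⟫ := by
    have hm : (mvec S ptil : Fin n → ℝ) = S *ᵥ (ptil : Fin n → ℝ) := rfl
    rw [trace_vecMulVec_mul, hm, inner_mvec]
    rw [Matrix.dotProduct_mulVec, ← Matrix.vecMul_transpose, hSsym,
      Matrix.vecMul_vecMul, ← Matrix.mul_assoc, hSinvS, Matrix.one_mul,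
      ← Matrix.dotProduct_mulVec]
  -- projection term is nonpositive
  have hproj : ⟪ptil, P phat - phat⟫ ≤ 0 := by
    rw [hptil]
    exact proj_inner_le (hB ▸ convex_closedBall p0 δbar) (hP phat).1 hpstar (hP phat).2
  -- nonnegativity of the damping term
  have hfrob_nonneg : 0 ≤ frob K := Real.sqrt_nonneg _
  have hfk2 : frob K ^ 2 = (Kᵀ * K).trace := Real.sq_sqrt (trace_sq_nonneg K)
  have hk0pos : 0 < k0 := lt_of_lt_of_le (by positivity) hk0
  have hdamp : 0 ≤ sg * (Kᵀ * S⁻¹ * Φ).trace := by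
    by_cases hcase : frob K < k0
    · have : sg = 0 := by rw [hsg_def, sigs, if_pos hcase]
      rw [this, zero_mul]
    · push_neg at hcase
      have hsg_nonneg : 0 ≤ sg := by
        rw [hsg_def, sigs, if_neg (not_lt.2 hcase)]
        split
        · have : (1:ℝ) ≤ frob K / k0 := (one_le_div hk0pos).2 hcase
          nlinarith
        · exact hσ.le
      apply mul_nonneg hsg_nonneg
      have hT2' : (Kᵀ * S⁻¹ * Φ).trace = (Kᵀ * S⁻¹ * K).trace
          + (Kᵀ * S⁻¹ * (S⁻¹)).trace := by
        rw [hΦ, Matrix.mul_add, Matrix.trace_add]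
      have hb1 : (Kᵀ * K).trace / lammax ≤ (Kᵀ * S⁻¹ * K).trace := by
        rw [hSinv]
        exact term1_bound U K e hU2 lammax hlmax_pos hepos hle_max
      have hb2 : -(Real.sqrt n * Real.sqrt ((Kᵀ * K).trace) / lammin ^ 2)
          ≤ (Kᵀ * S⁻¹ * (S⁻¹)).trace := by
        rw [hSinv]
        exact term2_bound U K e hU1 hU2 lammin hlmin_pos hge_min
      have h1 : Real.sqrt n * lammax / lammin ^ 2 ≤ frob K := le_trans hk0 hcase
      have h1' : Real.sqrt n * lammax ≤ frob K * lammin ^ 2 := by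
        rw [div_le_iff₀ (by positivity)] at h1; linarith
      have hkey : Real.sqrt n * Real.sqrt ((Kᵀ * K).trace) / lammin ^ 2
          ≤ (Kᵀ * K).trace / lammax := by
        rw [div_le_div_iff₀ (by positivity) (by positivity)]
        have hfk : Real.sqrt ((Kᵀ * K).trace) = frob K := rfl
        rw [hfk, ← hfk2]
        nlinarith [hfrob_nonneg, Real.sqrt_nonneg (n:ℝ), hlmax_pos]
      rw [hT2']
      linarith
  -- expand the inner product
  have hexp : ⟪ptil, -mvec S ptil + mvec Φ v + ε⁻¹ • (P phat - phat)⟫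
      = -⟪ptil, mvec S ptil⟫ + ⟪ptil, mvec Φ v⟫ + ε⁻¹ * ⟪ptil, P phat - phat⟫ := by
    rw [inner_add_right, inner_add_right, inner_neg_right, real_inner_smul_right]
  have hprojterm : ε⁻¹ * ⟪ptil, P phat - phat⟫ ≤ 0 :=
    mul_nonpos_of_nonneg_of_nonpos (inv_pos.2 hε).le hproj
  rw [hexp, ← Matrix.mul_assoc] at *
  rw [htr_split, hcancel]
  linarith

end
end
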